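/- Let ι be an index set, let (E_j)_{j∈ι} be real inner product spaces each containing a nonzero vector, and let c : ι → (0,∞). In the Hilbert space lp(E,2), consider the ellipsoid K := { w ∈ lp(E,2) : ∑_{j∈ι} c_j⁻¹ ‖w_j‖² ≤ 1 }. Then K is totally bounded in lp(E,2) if and only if every E_j is finite-dimensional and for every δ > 0 the set { j ∈ ι : c_j ≥ δ } is finite. -/

import Mathlib

set_option linter.unusedSectionVars false
open scoped ENNReal

section Helpers

lemma sep_not_tb {α : Type*} [PseudoMetricSpace α] {s : Set α} {r : ℝ} (hr : 0 < r)
    (hs : s.Infinite) (hsep : s.Pairwise fun x y => r ≤ dist x y) : ¬ TotallyBounded s := by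
  intro hTB
  obtain ⟨t, htf, hcov⟩ := (Metric.totallyBounded_iff.1 hTB) (r/2) (by linarith)
  have hch : ∀ x ∈ s, ∃ y ∈ t, x ∈ Metric.ball y (r/2) := by
    intro x hx; simpa using hcov hx
  classical
  choose! f hf1 hf2 using hch
  obtain ⟨x, hx, y, hy, hxy, hfeq⟩ := hs.exists_ne_map_eq_of_mapsTo (fun x hx => hf1 x hx) htf
  have h1 := hf2 x hx
  have h2 := hf2 y hy
  rw [Metric.mem_ball] at h1 h2
  have h3 : dist x y ≤ dist x (f x) + dist (f y) y := by
    rw [hfeq]; exact dist_triangle _ _ _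
  rw [dist_comm (f y) y] at h3
  linarith [hsep hx hy hxy]

variable {ι : Type*} {E : ι → Type*} [∀ j, NormedAddCommGroup (E j)] [DecidableEq ι]

lemma single_sub' (i : ι) (a b : E i) :
    lp.single (E := E) 2 i (a - b) = lp.single 2 i a - lp.single 2 i b := by
  apply lp.ext
  funext j
  rw [lp.coeFn_sub]
  by_cases h : j = i
  · subst h; simp [lp.single_apply_self]
  · simp [lp.single_apply_ne _ _ _ h]

lemma two_toReal' : (0:ℝ) < (2:ℝ≥0∞).toReal := by norm_num

lemma norm_single' (i : ι) (a : E i) : ‖lp.single (E := E) 2 i a‖ = ‖a‖ := by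
  have := lp.norm_single (E := E) (p := 2) (by norm_num) i a
  simpa using this

lemma isom_single' (i : ι) : Isometry (fun a : E i => lp.single (E := E) 2 i a) := by
  intro a b
  simp only [edist_dist, dist_eq_norm]
  rw [← single_sub', norm_single']

lemma hasSum_sq' (w : lp E 2) : HasSum (fun i => ‖w i‖ ^ 2) (‖w‖ ^ 2) := by
  have h := lp.hasSum_norm (E := E) (p := 2) (by norm_num) w
  have h2 : (2:ℝ≥0∞).toReal = (2:ℕ) := by norm_num
  simpa [h2, Real.rpow_natCast] using h

lemma coe_sum_single' (S : Finset ι) (w : lp E 2) (i : ι) :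
    (((∑ j ∈ S, lp.single 2 j (w j)) : lp E 2) : ∀ j, E j) i = if i ∈ S then w i else 0 := by
  simp only [lp.coeFn_sum, Finset.sum_apply, lp.single_apply, Finset.sum_dite_eq, Finset.sum_pi_single]

end Helpers

/-- Proposition 1(b).
In the Hilbert space `lp E 2` of square-summable families `(w j)` with `w j ∈ E j`, the
ellipsoid `K = { w : ∑ c j⁻¹ ‖w j‖² ≤ 1 }` (with `c j > 0`) is totally bounded if and only if
every `E j` is finite dimensional and for every `δ > 0` the set `{ j : c j ≥ δ }` is finite. -/
theorem stmt3 {ι : Type*} (E : ι → Type*) [∀ j, NormedAddCommGroup (E j)]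
    [∀ j, InnerProductSpace ℝ (E j)] (hE : ∀ j, ∃ v : E j, v ≠ 0)
    (c : ι → ℝ) (hc : ∀ j, 0 < c j) :
    TotallyBounded {w : lp E 2 | ∑' j, ENNReal.ofReal ((c j)⁻¹ * ‖w j‖ ^ 2) ≤ 1} ↔
    ((∀ j, FiniteDimensional ℝ (E j)) ∧ ∀ δ : ℝ, 0 < δ → {j | δ ≤ c j}.Finite) := by
  classical
  set K := {w : lp E 2 | ∑' j, ENNReal.ofReal ((c j)⁻¹ * ‖w j‖ ^ 2) ≤ 1} with hK
  have hmem : ∀ (j : ι) (a : E j), ‖a‖ ^ 2 ≤ c j → (lp.single 2 j a : lp E 2) ∈ K := by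
    intro j a ha
    simp only [hK, Set.mem_setOf_eq]
    have h0 : ∀ i, i ≠ j →
        ENNReal.ofReal ((c i)⁻¹ * ‖(lp.single (E := E) 2 j a : lp E 2) i‖ ^ 2) = 0 := by
      intro i hi
      rw [lp.single_apply_ne _ _ _ hi]
      simp
    rw [tsum_eq_single j h0, lp.single_apply_self, ENNReal.ofReal_le_one]
    have hcj := hc j
    calc (c j)⁻¹ * ‖a‖ ^ 2 ≤ (c j)⁻¹ * c j := by
          exact mul_le_mul_of_nonneg_left ha (by positivity)
      _ = 1 := inv_mul_cancel₀ hcj.ne'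
  constructor
  · intro hTB
    constructor
    · intro j₀
      by_contra hfin
      obtain ⟨R, f, hR, hfle, hfsep⟩ := exists_seq_norm_le_one_le_norm_sub (𝕜 := ℝ) hfin
      set q := Real.sqrt (c j₀) with hq'
      have hq : 0 < q := Real.sqrt_pos.2 (hc j₀)
      have hRp : (0:ℝ) < R := by linarith
      have hqR : 0 < q / R := div_pos hq hRp
      set g : ℕ → E j₀ := fun n => (q / R) • f n with hg'
      have hgle : ∀ n, ‖g n‖ ^ 2 ≤ c j₀ := by
        intro n
        have h1 : ‖g n‖ ≤ q := by
          rw [hg']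
          simp only [norm_smul, Real.norm_eq_abs, abs_of_pos hqR]
          calc q / R * ‖f n‖ ≤ q / R * R := by
                exact mul_le_mul_of_nonneg_left (hfle n) hqR.le
            _ = q := div_mul_cancel₀ _ hRp.ne'
        calc ‖g n‖ ^ 2 ≤ q ^ 2 := by nlinarith [norm_nonneg (g n)]
          _ = c j₀ := Real.sq_sqrt (hc j₀).le
      set e : ℕ → lp E 2 := fun n => lp.single 2 j₀ (g n) with he'
      have hsub : Set.range e ⊆ K := by
        rintro _ ⟨n, rfl⟩; exact hmem _ _ (hgle n)
      have hsep : ∀ m n, m ≠ n → q / R ≤ dist (e m) (e n) := by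
        intro m n hmn
        rw [he']
        simp only
        rw [dist_eq_norm, ← single_sub', norm_single',
          show g m - g n = (q/R) • (f m - f n) by rw [hg']; simp [smul_sub], norm_smul]
        have h1 : (1:ℝ) ≤ ‖f m - f n‖ := hfsep hmn
        simp only [Real.norm_eq_abs, abs_of_pos hqR]
        nlinarith
      have hinj : Function.Injective e := by
        intro m n h
        by_contra hmn
        have h2 := hsep m n hmn
        rw [h, dist_self] at h2
        linarith
      exact sep_not_tb hqR (Set.infinite_range_of_injective hinj)
        (by rintro _ ⟨m, rfl⟩ _ ⟨n, rfl⟩ hne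
            exact hsep m n (fun h => hne (by rw [h])))
        (hTB.subset hsub)
    · intro δ hδ
      by_contra hinf
      have hinf : {j | δ ≤ c j}.Infinite := hinf
      set u : ∀ j, E j := fun j =>
        (Real.sqrt (c j) / ‖(hE j).choose‖) • (hE j).choose with hu'
      have hun : ∀ j, ‖u j‖ = Real.sqrt (c j) := by
        intro j
        have hv : (hE j).choose ≠ 0 := (hE j).choose_spec
        have hvn : 0 < ‖(hE j).choose‖ := norm_pos_iff.2 hv
        rw [hu']
        simp only [norm_smul, Real.norm_eq_abs,
          abs_of_pos (div_pos (Real.sqrt_pos.2 (hc j)) hvn)]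
        exact div_mul_cancel₀ _ hvn.ne'
      set e : ι → lp E 2 := fun j => lp.single 2 j (u j) with he'
      have hmeme : ∀ j, e j ∈ K := by
        intro j
        apply hmem
        rw [hun j, Real.sq_sqrt (hc j).le]
      have hkey : ∀ j k, j ≠ k → dist (e j) (e k) ^ 2 = c j + c k := by
        intro j k hjk
        set F : ∀ i, E i := Function.update (Pi.single j (u j)) k (-(u k)) with hF'
        have hFj : F j = u j := by
          rw [hF', Function.update_of_ne hjk, Pi.single_eq_same]
        have hFk : F k = -(u k) := by rw [hF', Function.update_self]
        have hsum : ∑ i ∈ ({j, k} : Finset ι), lp.single 2 i (F i) = e j - e k := by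
          rw [Finset.sum_pair hjk, hFj, hFk, lp.single_neg, he']
          simp [sub_eq_add_neg]
        have h2 := lp.norm_sum_single (E := E) (p := 2) two_toReal' F {j, k}
        rw [hsum] at h2
        rw [Finset.sum_pair hjk, hFj, hFk] at h2
        have h3 : (2:ℝ≥0∞).toReal = ((2:ℕ):ℝ) := by norm_num
        rw [h3, Real.rpow_natCast, Real.rpow_natCast, Real.rpow_natCast] at h2
        rw [dist_eq_norm, h2, norm_neg, hun, hun,
          Real.sq_sqrt (hc j).le, Real.sq_sqrt (hc k).le]
      have hsep : ∀ j ∈ {j | δ ≤ c j}, ∀ k ∈ {j | δ ≤ c j}, j ≠ k →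
          Real.sqrt δ ≤ dist (e j) (e k) := by
        intro j hj k hk hjk
        have h2 := hkey j k hjk
        have : δ ≤ dist (e j) (e k) ^ 2 := by
          rw [h2]; have := hc k; simp only [Set.mem_setOf_eq] at hj hk; linarith
        calc Real.sqrt δ ≤ Real.sqrt (dist (e j) (e k) ^ 2) := Real.sqrt_le_sqrt this
          _ = dist (e j) (e k) := Real.sqrt_sq dist_nonneg
      have hinjOn : Set.InjOn e {j | δ ≤ c j} := by
        intro j hj k hk hjk
        by_contra hne
        have h2 := hsep j hj k hk hne
        rw [hjk, dist_self] at h2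
        have := Real.sqrt_pos.2 hδ
        linarith
      have hsub : e '' {j | δ ≤ c j} ⊆ K := by
        rintro _ ⟨j, _, rfl⟩; exact hmeme j
      refine sep_not_tb (Real.sqrt_pos.2 hδ) (hinf.image hinjOn) ?_ (hTB.subset hsub)
      rintro _ ⟨j, hj, rfl⟩ _ ⟨k, hk, rfl⟩ hne
      exact hsep j hj k hk (fun h => hne (by rw [h]))
  · rintro ⟨hfd, hfin⟩
    haveI := hfd
    rw [Metric.totallyBounded_iff]
    intro ε hε
    set δ := ε ^ 2 / 8 with hδdef
    have hδ : 0 < δ := by positivity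
    set S : Finset ι := (hfin δ hδ).toFinset with hS
    set M := Real.sqrt (∑ j ∈ S, c j) with hM
    set T : (∀ j : S, E j) → lp E 2 :=
      fun x => ∑ j ∈ S.attach, lp.single 2 (j : ι) (x j) with hT
    have hTc : Continuous T := by
      apply continuous_finset_sum
      intro j _
      exact ((isom_single' (E := E) (j : ι)).continuous).comp (continuous_apply j)
    have hcomp : IsCompact (T '' Metric.closedBall 0 M) :=
      (isCompact_closedBall _ _).image hTc
    obtain ⟨t, htf, hcov⟩ :=
      Metric.totallyBounded_iff.1 hcomp.totallyBounded (ε/2) (by linarith)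
    refine ⟨t, htf, ?_⟩
    intro w hw
    simp only [hK, Set.mem_setOf_eq] at hw
    have hcoord_le : ∀ j : ι, ‖w j‖ ^ 2 ≤ c j := by
      intro j
      have h1 : ENNReal.ofReal ((c j)⁻¹ * ‖w j‖ ^ 2) ≤ 1 := le_trans (ENNReal.le_tsum j) hw
      rw [ENNReal.ofReal_le_one] at h1
      have hcj := hc j
      calc ‖w j‖ ^ 2 = c j * ((c j)⁻¹ * ‖w j‖ ^ 2) := by field_simp
        _ ≤ c j * 1 := mul_le_mul_of_nonneg_left h1 hcj.le
        _ = c j := mul_one _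
    set x : ∀ j : S, E j := fun j => w (j : ι) with hx
    have hxball : x ∈ Metric.closedBall (0 : ∀ j : S, E j) M := by
      rw [Metric.mem_closedBall, dist_zero_right]
      refine (pi_norm_le_iff_of_nonneg (Real.sqrt_nonneg _)).2 ?_
      intro j
      have h1 : ‖w (j : ι)‖ ^ 2 ≤ c j := hcoord_le j
      have h2 : c (j : ι) ≤ ∑ i ∈ S, c i :=
        Finset.single_le_sum (fun i _ => (hc i).le) j.2
      calc ‖x j‖ = Real.sqrt (‖w (j : ι)‖ ^ 2) := (Real.sqrt_sq (norm_nonneg _)).symm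
        _ ≤ M := Real.sqrt_le_sqrt (by linarith)
    have hTx : T x = ∑ j ∈ S, lp.single 2 j (w j) := by
      show (∑ j ∈ S.attach, lp.single 2 (j : ι) (w (j : ι)) : lp E 2) = ∑ j ∈ S, lp.single 2 j (w j)
      exact Finset.sum_attach S (fun j => lp.single 2 j (w j))
    set g : lp E 2 := w - ∑ j ∈ S, lp.single 2 j (w j) with hg
    have hgcoord : ∀ i, (g : ∀ j, E j) i = if i ∈ S then 0 else w i := by
      intro i
      rw [hg, lp.coeFn_sub, Pi.sub_apply, coe_sum_single']
      by_cases h : i ∈ S <;> simp [h]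
    have hgsum : HasSum (fun i => ‖(g : ∀ j, E j) i‖ ^ 2) (‖g‖ ^ 2) := hasSum_sq' g
    have hofg : ENNReal.ofReal (‖g‖ ^ 2) = ∑' i, ENNReal.ofReal (‖(g : ∀ j, E j) i‖ ^ 2) := by
      rw [← hgsum.tsum_eq]
      exact ENNReal.ofReal_tsum_of_nonneg (fun i => by positivity) hgsum.summable
    have hbound : ENNReal.ofReal (‖g‖ ^ 2) ≤ ENNReal.ofReal δ := by
      rw [hofg]
      calc ∑' i, ENNReal.ofReal (‖(g : ∀ j, E j) i‖ ^ 2)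
          ≤ ∑' i, (ENNReal.ofReal δ * ENNReal.ofReal ((c i)⁻¹ * ‖w i‖ ^ 2)) := by
            apply ENNReal.tsum_le_tsum
            intro i
            rw [hgcoord i]
            by_cases h : i ∈ S
            · simp [h]
            · rw [if_neg h, ← ENNReal.ofReal_mul hδ.le]
              apply ENNReal.ofReal_le_ofReal
              have hci : c i < δ := by
                by_contra hcon
                exact h (by rw [hS]; simpa using not_lt.mp hcon)
              have hcj := hc i
              have hnn : 0 ≤ (c i)⁻¹ * ‖w i‖ ^ 2 := by positivity
              calc ‖w i‖ ^ 2 = c i * ((c i)⁻¹ * ‖w i‖ ^ 2) := by field_simp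
                _ ≤ δ * ((c i)⁻¹ * ‖w i‖ ^ 2) := mul_le_mul_of_nonneg_right hci.le hnn
        _ = ENNReal.ofReal δ * ∑' i, ENNReal.ofReal ((c i)⁻¹ * ‖w i‖ ^ 2) :=
            ENNReal.tsum_mul_left
        _ ≤ ENNReal.ofReal δ * 1 := by gcongr
        _ = ENNReal.ofReal δ := mul_one _
    have hgle : ‖g‖ ^ 2 ≤ δ := (ENNReal.ofReal_le_ofReal_iff hδ.le).1 hbound
    have hgnorm : ‖g‖ < ε / 2 := by
      have h1 : ‖g‖ ≤ Real.sqrt δ := by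
        rw [← Real.sqrt_sq (norm_nonneg g)]
        exact Real.sqrt_le_sqrt hgle
      have h2 : Real.sqrt δ < ε / 2 := by
        have h3 : δ < (ε / 2) ^ 2 := by rw [hδdef]; nlinarith
        calc Real.sqrt δ < Real.sqrt ((ε/2)^2) := Real.sqrt_lt_sqrt hδ.le h3
          _ = ε / 2 := Real.sqrt_sq (by linarith)
      linarith
    obtain ⟨a, hat, haball⟩ :=
      Set.mem_iUnion₂.1 (hcov ⟨x, hxball, rfl⟩)
    refine Set.mem_biUnion hat ?_
    rw [Metric.mem_ball] at haball ⊢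
    have hd : dist w (T x) < ε / 2 := by
      rw [dist_eq_norm, hTx]
      exact hgnorm
    calc dist w a ≤ dist w (T x) + dist (T x) a := dist_triangle _ _ _
      _ < ε / 2 + ε / 2 := add_lt_add hd haball
      _ = ε := by ring
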